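/- Let c ∈ ℝ^d have three special coordinates with values at least (1/2)a_1√(log n), (1/2)b√(log n), and exactly c√(log n), and all remaining coordinates bounded by (t/n)b√(log n) in absolute value, where a_1 + b ≥ 0.4 and t√d = o(n^{0.99}). Let σ ∈ {−1,+1}^d be uniform random signs. Then Pr[⟨c, σ⟩ ≥ (c+0.1)√(log n)] ≥ 1/10 for sufficiently large n. -/

import Mathlib

open scoped Classical
open Finset

open Finset

noncomputable def eps (x : Bool) : ℝ := if x then 1 else -1

lemma eps_sq (x : Bool) : eps x * eps x = 1 := by cases x <;> simp [eps]

lemma eps_not (x : Bool) : eps (!x) = - eps x := by cases x <;> simp [eps]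

lemma sum_eps_mul_eps {D : ℕ} {i j : Fin D} (hij : i ≠ j) :
    ∑ σ : Fin D → Bool, eps (σ i) * eps (σ j) = 0 := by
  refine Finset.sum_ninvolution (fun σ => Function.update σ i (!σ i)) ?_ ?_ (by simp) ?_
  · intro σ
    rw [Function.update_self, Function.update_of_ne (Ne.symm hij), eps_not]
    ring
  · intro σ _ h
    have := congrFun h i
    simp only [Function.update_self] at this
    exact (Bool.not_ne_self _) this
  · intro σ
    funext k
    by_cases hk : k = i
    · subst hk; simp
    · simp [Function.update_of_ne hk]

lemma second_moment {D : ℕ} (T : Finset (Fin D)) (w : Fin D → ℝ) :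
    ∑ σ : Fin D → Bool, (∑ i ∈ T, w i * eps (σ i))^2
      = 2^D * ∑ i ∈ T, (w i)^2 := by
  have hexp : ∀ σ : Fin D → Bool, (∑ i ∈ T, w i * eps (σ i))^2
      = ∑ i ∈ T, ∑ j ∈ T, (w i * eps (σ i)) * (w j * eps (σ j)) := by
    intro σ; rw [sq, Finset.sum_mul_sum]
  simp_rw [hexp]
  rw [Finset.sum_comm]
  have : ∀ i ∈ T, ∑ σ : Fin D → Bool, ∑ j ∈ T, (w i * eps (σ i)) * (w j * eps (σ j))
        = 2^D * (w i)^2 := by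
    intro i hi
    rw [Finset.sum_comm]
    have hone : ∀ j ∈ T, ∑ σ : Fin D → Bool, (w i * eps (σ i)) * (w j * eps (σ j))
        = if j = i then 2^D * (w i)^2 else 0 := by
      intro j hj
      by_cases hij : j = i
      · subst hij
        simp only [if_pos rfl]
        have : ∀ σ : Fin D → Bool, (w j * eps (σ j)) * (w j * eps (σ j)) = (w j)^2 := by
          intro σ
          have := eps_sq (σ j); nlinarith [eps_sq (σ j)]
        rw [Finset.sum_congr rfl (fun σ _ => this σ)]
        rw [Finset.sum_const, Finset.card_univ, Fintype.card_fun]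
        simp [mul_comm]
      · rw [if_neg hij]
        have : ∀ σ : Fin D → Bool, (w i * eps (σ i)) * (w j * eps (σ j))
            = (w i * w j) * (eps (σ i) * eps (σ j)) := fun σ => by ring
        rw [Finset.sum_congr rfl (fun σ _ => this σ), ← Finset.mul_sum,
          sum_eps_mul_eps (Ne.symm hij)]
        ring
    rw [Finset.sum_congr rfl hone, Finset.sum_ite_eq' T i (fun _ => 2^D * (w i)^2), if_pos hi]
  rw [Finset.sum_congr rfl this, ← Finset.mul_sum]

lemma markov_count {α : Type*} [Fintype α] {θ : ℝ} (hθ : 0 < θ) (X : α → ℝ) :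
    ((Finset.univ.filter (fun a => θ ≤ |X a|)).card : ℝ) * θ^2 ≤ ∑ a : α, (X a)^2 := by
  have h1 : ((Finset.univ.filter (fun a => θ ≤ |X a|)).card : ℝ) * θ^2
      = ∑ a ∈ Finset.univ.filter (fun a => θ ≤ |X a|), θ^2 := by
    rw [Finset.sum_const, nsmul_eq_mul]
  rw [h1]
  calc ∑ a ∈ Finset.univ.filter (fun a => θ ≤ |X a|), θ^2
      ≤ ∑ a ∈ Finset.univ.filter (fun a => θ ≤ |X a|), (X a)^2 := by
        refine Finset.sum_le_sum (fun a ha => ?_)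
        have := (Finset.mem_filter.mp ha).2
        calc θ^2 ≤ |X a|^2 := by nlinarith [abs_nonneg (X a)]
        _ = (X a)^2 := sq_abs _
    _ ≤ ∑ a : α, (X a)^2 :=
        Finset.sum_le_sum_of_subset_of_nonneg (Finset.filter_subset _ _)
          (fun a _ _ => sq_nonneg _)

noncomputable def fixEquiv {D : ℕ} (i₁ i₂ i₃ : Fin D) :
    {σ : Fin D → Bool // σ i₁ = true ∧ σ i₂ = true ∧ σ i₃ = true}
      ≃ ({i : Fin D // i ≠ i₁ ∧ i ≠ i₂ ∧ i ≠ i₃} → Bool) where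
  toFun σ j := σ.1 j.1
  invFun f := ⟨fun i => if h : i ≠ i₁ ∧ i ≠ i₂ ∧ i ≠ i₃ then f ⟨i, h⟩ else true,
    by refine ⟨?_, ?_, ?_⟩ <;> simp⟩
  left_inv σ := by
    apply Subtype.ext; funext i
    rcases eq_or_ne i i₁ with rfl | h1
    · simp [σ.2.1]
    rcases eq_or_ne i i₂ with rfl | h2
    · simp [σ.2.2.1]
    rcases eq_or_ne i i₃ with rfl | h3
    · simp [σ.2.2.2]
    simp [h1, h2, h3]
  right_inv f := by
    funext j
    simp [j.2.1, j.2.2.1, j.2.2.2]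

lemma card_fixed3 {D : ℕ} (i₁ i₂ i₃ : Fin D) (h12 : i₁ ≠ i₂) (h13 : i₁ ≠ i₃) (h23 : i₂ ≠ i₃) :
    ((Finset.univ.filter (fun σ : Fin D → Bool =>
        σ i₁ = true ∧ σ i₂ = true ∧ σ i₃ = true)).card : ℝ) * 8 = 2^D := by
  have hD : 3 ≤ D := by
    have h3 : ({i₁, i₂, i₃} : Finset (Fin D)).card = 3 := by
      rw [Finset.card_insert_of_notMem (by simp [h12, h13]),
        Finset.card_insert_of_notMem (by simp [h23]), Finset.card_singleton]
    calc 3 = ({i₁,i₂,i₃} : Finset (Fin D)).card := h3.symm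
      _ ≤ Finset.univ.card := Finset.card_le_univ _
      _ = D := by simp
  have hsub : Fintype.card {i : Fin D // i ≠ i₁ ∧ i ≠ i₂ ∧ i ≠ i₃} = D - 3 := by
    rw [Fintype.card_subtype]
    have hfe : Finset.univ.filter (fun i : Fin D => i ≠ i₁ ∧ i ≠ i₂ ∧ i ≠ i₃)
        = Finset.univ \ {i₁, i₂, i₃} := by
      ext i; simp [not_or]
    rw [hfe, Finset.card_sdiff_of_subset (Finset.subset_univ _)]
    have h3 : ({i₁, i₂, i₃} : Finset (Fin D)).card = 3 := by
      rw [Finset.card_insert_of_notMem (by simp [h12, h13]),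
        Finset.card_insert_of_notMem (by simp [h23]), Finset.card_singleton]
    simp [h3]
  have hcard : (Finset.univ.filter (fun σ : Fin D → Bool =>
      σ i₁ = true ∧ σ i₂ = true ∧ σ i₃ = true)).card = 2 ^ (D - 3) := by
    rw [← Fintype.card_subtype, Fintype.card_congr (fixEquiv i₁ i₂ i₃),
      Fintype.card_fun, Fintype.card_bool, hsub]
  rw [hcard]
  push_cast
  rw [show (8:ℝ) = 2^3 by norm_num, ← pow_add, Nat.sub_add_cancel hD]

set_option maxHeartbeats 1000000 in
theorem stmt_13 (t d : ℕ → ℕ)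
    (hlo : (fun n : ℕ => (t n : ℝ) * Real.sqrt (d n)) =o[Filter.atTop]
      (fun n : ℕ => (n : ℝ) ^ (0.99 : ℝ)))
    (a₁ b c : ℝ) (ha : 0 < a₁) (hb : 0 < b) (hc : 0 < c) (hab : 0.4 ≤ a₁ + b) :
    ∃ N : ℕ, ∀ n ≥ N,
      ∀ (v : Fin (d n) → ℝ) (i₁ i₂ i₃ : Fin (d n)),
        i₁ ≠ i₂ → i₁ ≠ i₃ → i₂ ≠ i₃ →
        (1/2) * a₁ * Real.sqrt (Real.log n) ≤ v i₁ →
        (1/2) * b * Real.sqrt (Real.log n) ≤ v i₂ →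
        v i₃ = c * Real.sqrt (Real.log n) →
        (∀ i, i ≠ i₁ → i ≠ i₂ → i ≠ i₃ →
          |v i| ≤ ((t n : ℝ) / n) * b * Real.sqrt (Real.log n)) →
        (1 : ℝ) / 10 ≤
          ((Finset.univ.filter (fun σ : Fin (d n) → Bool =>
              (c + 0.1) * Real.sqrt (Real.log n) ≤
                ∑ i, v i * (if σ i then (1:ℝ) else -1))).card : ℝ) / 2 ^ (d n) := by
  have hε : (0:ℝ) < 1 / (64 * b) := by positivity
  obtain ⟨N₀, hN₀⟩ := Filter.eventually_atTop.mp (hlo.def hε)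
  refine ⟨max N₀ 2, fun n hn => ?_⟩
  intro v i₁ i₂ i₃ h12 h13 h23 hv1 hv2 hv3 hvrest
  have hn2 : 2 ≤ n := le_trans (le_max_right _ _) hn
  have hn1 : (1:ℝ) < n := by exact_mod_cast hn2
  have hn0 : (0:ℝ) < n := by linarith
  have hlog : 0 < Real.log n := Real.log_pos hn1
  set L := Real.sqrt (Real.log n) with hLdef
  have hLpos : 0 < L := Real.sqrt_pos.mpr hlog
  have hLsq : L ^ 2 = Real.log n := Real.sq_sqrt hlog.le
  -- smallness from the little-o hypothesis
  have hsmall : (t n : ℝ) * Real.sqrt (d n) ≤ (1 / (64*b)) * n := by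
    have h1 := hN₀ n (le_trans (le_max_left _ _) hn)
    rw [Real.norm_eq_abs, Real.norm_eq_abs,
      abs_of_nonneg (by positivity : (0:ℝ) ≤ (t n : ℝ) * Real.sqrt (d n)),
      abs_of_nonneg (Real.rpow_nonneg hn0.le _)] at h1
    have h2 : ((n:ℝ)) ^ (0.99:ℝ) ≤ n := by
      calc ((n:ℝ)) ^ (0.99:ℝ) ≤ ((n:ℝ)) ^ (1:ℝ) :=
            Real.rpow_le_rpow_of_exponent_le hn1.le (by norm_num)
        _ = n := Real.rpow_one _
    calc (t n : ℝ) * Real.sqrt (d n) ≤ (1/(64*b)) * ((n:ℝ)) ^ (0.99:ℝ) := h1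
      _ ≤ (1/(64*b)) * n := by
          exact mul_le_mul_of_nonneg_left h2 hε.le
  have hsq : ((t n : ℝ))^2 * (d n) ≤ (n:ℝ)^2 / (4096 * b^2) := by
    have h0 : (0:ℝ) ≤ (t n : ℝ) * Real.sqrt (d n) := by positivity
    have hmul := mul_self_le_mul_self h0 hsmall
    have hsD : Real.sqrt (d n) * Real.sqrt (d n) = (d n) := Real.mul_self_sqrt (by positivity)
    have e1 : ((t n : ℝ) * Real.sqrt (d n)) * ((t n : ℝ) * Real.sqrt (d n))
        = ((t n : ℝ))^2 * (d n) := by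
      calc ((t n : ℝ) * Real.sqrt (d n)) * ((t n : ℝ) * Real.sqrt (d n))
          = ((t n : ℝ))^2 * (Real.sqrt (d n) * Real.sqrt (d n)) := by ring
        _ = ((t n : ℝ))^2 * (d n) := by rw [hsD]
    have e2 : (1/(64*b) * (n:ℝ)) * (1/(64*b) * (n:ℝ)) = (n:ℝ)^2 / (4096 * b^2) := by
      field_simp; ring
    rw [e1, e2] at hmul
    exact hmul
  -- notation
  set S : Finset (Fin (d n)) := {i₁, i₂, i₃} with hSdef
  set T : Finset (Fin (d n)) := Finset.univ \ S with hTdef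
  set θ : ℝ := 0.1 * L with hθdef
  have hθpos : 0 < θ := by positivity
  set X : (Fin (d n) → Bool) → ℝ := fun σ => ∑ i ∈ T, v i * eps (σ i) with hXdef
  set A : Finset (Fin (d n) → Bool) :=
    Finset.univ.filter (fun σ => σ i₁ = true ∧ σ i₂ = true ∧ σ i₃ = true) with hAdef
  set B : Finset (Fin (d n) → Bool) := Finset.univ.filter (fun σ => θ ≤ |X σ|) with hBdef
  set G : Finset (Fin (d n) → Bool) :=
    Finset.univ.filter (fun σ : Fin (d n) → Bool =>
      (c + 0.1) * L ≤ ∑ i, v i * (if σ i then (1:ℝ) else -1)) with hGdef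
  -- variance bound
  have hM : ∀ i ∈ T, (v i)^2 ≤ ((t n : ℝ) / n * b * L)^2 := by
    intro i hi
    rw [hTdef, Finset.mem_sdiff, hSdef] at hi
    simp only [Finset.mem_insert, Finset.mem_singleton, not_or] at hi
    obtain ⟨-, hi1, hi2, hi3⟩ := hi
    have := hvrest i hi1 hi2 hi3
    calc (v i)^2 = |v i|^2 := (sq_abs _).symm
      _ ≤ ((t n : ℝ) / n * b * L)^2 := by
          exact pow_le_pow_left₀ (abs_nonneg _) this 2
  have hV : ∑ i ∈ T, (v i)^2 ≤ ((d n):ℝ) * ((t n : ℝ) / n * b * L)^2 := by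
    calc ∑ i ∈ T, (v i)^2 ≤ ∑ _i ∈ T, ((t n : ℝ) / n * b * L)^2 := Finset.sum_le_sum hM
      _ = (T.card : ℝ) * ((t n : ℝ) / n * b * L)^2 := by
          rw [Finset.sum_const, nsmul_eq_mul]
      _ ≤ ((d n):ℝ) * ((t n : ℝ) / n * b * L)^2 := by
          have : T.card ≤ (d n) := le_trans (Finset.card_le_univ _) (by simp)
          exact mul_le_mul_of_nonneg_right (by exact_mod_cast this) (by positivity)
  have hVsmall : ∑ i ∈ T, (v i)^2 ≤ θ^2 / 40 := by
    have hexp : ((d n):ℝ) * ((t n : ℝ) / n * b * L)^2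
        = (((t n : ℝ))^2 * (d n)) * b^2 * L^2 / (n:ℝ)^2 := by
      field_simp
    have h1 : (((t n : ℝ))^2 * (d n)) * b^2 * L^2 / (n:ℝ)^2
        ≤ ((n:ℝ)^2 / (4096 * b^2)) * b^2 * L^2 / (n:ℝ)^2 := by
      apply div_le_div_of_nonneg_right ?_ (by positivity)
      have hL2 : (0:ℝ) ≤ L^2 := sq_nonneg _
      exact mul_le_mul_of_nonneg_right (mul_le_mul_of_nonneg_right hsq (sq_nonneg b)) hL2
    have h2 : ((n:ℝ)^2 / (4096 * b^2)) * b^2 * L^2 / (n:ℝ)^2 = L^2 / 4096 := by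
      field_simp
    have h3 : θ^2 / 40 = L^2 / 4000 := by rw [hθdef]; ring
    rw [h3]
    calc ∑ i ∈ T, (v i)^2 ≤ ((d n):ℝ) * ((t n : ℝ) / n * b * L)^2 := hV
      _ = (((t n : ℝ))^2 * (d n)) * b^2 * L^2 / (n:ℝ)^2 := hexp
      _ ≤ L^2 / 4096 := by rw [← h2]; exact h1
      _ ≤ L^2 / 4000 := by
          apply div_le_div_of_nonneg_left (sq_nonneg _) (by norm_num) (by norm_num)
  -- bound on |B|
  have hBcard : (B.card : ℝ) ≤ 2^(d n) / 40 := by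
    have hmk := markov_count hθpos X
    have hsm := second_moment T v
    have : (B.card : ℝ) * θ^2 ≤ 2^(d n) * (θ^2/40) := by
      calc (B.card : ℝ) * θ^2 ≤ ∑ σ : Fin (d n) → Bool, (X σ)^2 := hmk
        _ = 2^(d n) * ∑ i ∈ T, (v i)^2 := hsm
        _ ≤ 2^(d n) * (θ^2/40) := by
            exact mul_le_mul_of_nonneg_left hVsmall (by positivity)
    have hθ2 : (0:ℝ) < θ^2 := by positivity
    have h' : (B.card : ℝ) * θ^2 ≤ (2^(d n) / 40) * θ^2 := by
      calc (B.card : ℝ) * θ^2 ≤ 2^(d n) * (θ^2/40) := this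
        _ = (2^(d n) / 40) * θ^2 := by ring
    exact le_of_mul_le_mul_right h' hθ2
  -- A ⊆ G ∪ B
  have hAGB : A ⊆ G ∪ B := by
    intro σ hA
    rw [hAdef, Finset.mem_filter] at hA
    obtain ⟨-, hσ1, hσ2, hσ3⟩ := hA
    by_cases hB : σ ∈ B
    · exact Finset.mem_union_right _ hB
    rw [hBdef, Finset.mem_filter] at hB
    push_neg at hB
    have hXb : -θ < X σ := (abs_lt.mp (hB (Finset.mem_univ _))).1
    apply Finset.mem_union_left
    rw [hGdef, Finset.mem_filter]
    refine ⟨Finset.mem_univ _, ?_⟩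
    have hsplit : ∑ i, v i * (if σ i then (1:ℝ) else -1)
        = X σ + ∑ i ∈ S, v i * eps (σ i) := by
      have h := Finset.sum_sdiff (f := fun i => v i * eps (σ i)) (Finset.subset_univ S)
      show _ = (∑ i ∈ T, v i * eps (σ i)) + ∑ i ∈ S, v i * eps (σ i)
      rw [hTdef]
      simp only [eps] at h ⊢
      exact h.symm
    have hSsum : ∑ i ∈ S, v i * eps (σ i) = v i₁ + v i₂ + v i₃ := by
      have heps : eps true = 1 := by simp [eps]
      rw [hSdef, Finset.sum_insert (by simp [h12, h13]),
        Finset.sum_insert (by simp [h23]), Finset.sum_singleton,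
        hσ1, hσ2, hσ3, heps]
      ring
    rw [hsplit, hSsum, hv3]
    have h05 : 0.2 * L ≤ (1/2) * a₁ * L + (1/2) * b * L := by
      nlinarith [mul_nonneg hLpos.le (show (0:ℝ) ≤ a₁ + b - 0.4 by linarith)]
    rw [hθdef] at hXb
    linarith [hv1, hv2]
  -- conclude
  have hAcard : (A.card : ℝ) * 8 = 2^(d n) := card_fixed3 i₁ i₂ i₃ h12 h13 h23
  have hcards : (A.card : ℝ) ≤ (G.card : ℝ) + (B.card : ℝ) := by
    have h1 : A.card ≤ (G ∪ B).card := Finset.card_le_card hAGB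
    have h2 : (G ∪ B).card ≤ G.card + B.card := Finset.card_union_le _ _
    exact_mod_cast le_trans h1 h2
  have h2D : (0:ℝ) < 2^(d n) := by positivity
  rw [le_div_iff₀ h2D]
  have : (2:ℝ)^(d n) / 8 ≤ (G.card : ℝ) + 2^(d n)/40 := by
    calc (2:ℝ)^(d n) / 8 = (A.card : ℝ) := by linarith
      _ ≤ (G.card : ℝ) + (B.card : ℝ) := hcards
      _ ≤ (G.card : ℝ) + 2^(d n)/40 := by linarith
  linarith
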